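/- Let 𝒮 be a commutative semigroup of n×n matrices over ℝ≥0 acting by max-times multiplication, leaving a closed max cone V ⊆ (ℝ≥0)ⁿ with a nonzero vector invariant. Then 𝒮 has a common eigenvector in V: a nonzero v ∈ V such that for each A ∈ 𝒮 there exists λ_A ∈ ℝ≥0 with A ⊗ v = λ_A·v. -/

import Mathlib

open scoped NNReal

def MaxCone {n : ℕ} (W : Set (Fin n → ℝ≥0)) : Prop :=
  (0 : Fin n → ℝ≥0) ∈ W ∧
  (∀ x ∈ W, ∀ y ∈ W, x ⊔ y ∈ W) ∧
  (∀ r : ℝ≥0, ∀ x ∈ W, r • x ∈ W)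

def maxMul {n : ℕ} (A : Matrix (Fin n) (Fin n) ℝ≥0) (v : Fin n → ℝ≥0) : Fin n → ℝ≥0 :=
  fun i => Finset.univ.sup fun j => A i j * v j

def maxMatMul {n : ℕ} (A B : Matrix (Fin n) (Fin n) ℝ≥0) : Matrix (Fin n) (Fin n) ℝ≥0 :=
  fun i j => Finset.univ.sup fun k => A i k * B k j

open Filter Topology
set_option synthInstance.maxHeartbeats 1000000
set_option maxHeartbeats 1000000
set_option linter.unusedVariables false


lemma mul_le_mul_left' {a b : ℝ≥0} (h : a ≤ b) (c : ℝ≥0) : c * a ≤ c * b :=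
  mul_le_mul_of_nonneg_left h zero_le

lemma mul_le_mul_right' {a b : ℝ≥0} (h : a ≤ b) (c : ℝ≥0) : a * c ≤ b * c :=
  mul_le_mul_of_nonneg_right h zero_le

lemma mul_sup' (a b c : ℝ≥0) : a * (b ⊔ c) = a * b ⊔ a * c :=
  Monotone.map_max (f := (a * ·)) fun _ _ h => mul_le_mul_left' h a

lemma smul_sup' {n : ℕ} (r : ℝ≥0) (x y : Fin n → ℝ≥0) : r • (x ⊔ y) = r • x ⊔ r • y := by
  funext i; exact mul_sup' r (x i) (y i)

lemma finset_sup_sup {α} (s : Finset α) (f g : α → ℝ≥0) :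
    (s.sup fun j => f j ⊔ g j) = s.sup f ⊔ s.sup g := by
  apply le_antisymm
  · exact Finset.sup_le fun j hj => sup_le_sup (Finset.le_sup hj) (Finset.le_sup hj)
  · exact sup_le (Finset.sup_mono_fun fun j _ => le_sup_left)
      (Finset.sup_mono_fun fun j _ => le_sup_right)

lemma maxMul_sup {n : ℕ} (A : Matrix (Fin n) (Fin n) ℝ≥0) (x y : Fin n → ℝ≥0) :
    maxMul A (x ⊔ y) = maxMul A x ⊔ maxMul A y := by
  funext i
  show (Finset.univ.sup fun j => A i j * (x j ⊔ y j)) = _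
  simp only [mul_sup']
  exact finset_sup_sup _ _ _

lemma maxMul_smul {n : ℕ} (A : Matrix (Fin n) (Fin n) ℝ≥0) (r : ℝ≥0) (x : Fin n → ℝ≥0) :
    maxMul A (r • x) = r • maxMul A x := by
  funext i
  show (Finset.univ.sup fun j => A i j * (r * x j)) = r * Finset.univ.sup fun j => A i j * x j
  rw [NNReal.mul_finset_sup]
  congr 1; funext j; ring

lemma maxMul_mono {n : ℕ} (A : Matrix (Fin n) (Fin n) ℝ≥0) {x y : Fin n → ℝ≥0} (h : x ≤ y) :
    maxMul A x ≤ maxMul A y :=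
  fun _ => Finset.sup_mono_fun fun j _ => mul_le_mul_left' (h j) _

lemma maxMul_zero {n : ℕ} (A : Matrix (Fin n) (Fin n) ℝ≥0) : maxMul A 0 = 0 := by
  funext i; simp [maxMul]

lemma maxMul_assoc {n : ℕ} (A B : Matrix (Fin n) (Fin n) ℝ≥0) (v : Fin n → ℝ≥0) :
    maxMul (maxMatMul A B) v = maxMul A (maxMul B v) := by
  funext i
  show (Finset.univ.sup fun j => (Finset.univ.sup fun k => A i k * B k j) * v j)
      = Finset.univ.sup fun k => A i k * Finset.univ.sup fun j => B k j * v j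
  have h1 : ∀ j : Fin n, (Finset.univ.sup fun k => A i k * B k j) * v j
      = Finset.univ.sup fun k => A i k * B k j * v j := by
    intro j
    rw [mul_comm, NNReal.mul_finset_sup]
    congr 1; funext k; ring
  have h2 : ∀ k : Fin n, A i k * (Finset.univ.sup fun j => B k j * v j)
      = Finset.univ.sup fun j => A i k * B k j * v j := by
    intro k; rw [NNReal.mul_finset_sup]; congr 1; funext j; ring
  simp only [h1, h2]
  exact Finset.sup_comm _ _ _

lemma continuous_finset_sup {n : ℕ} {α} (s : Finset α) (f : α → (Fin n → ℝ≥0) → ℝ≥0)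
    (hf : ∀ a, Continuous (f a)) : Continuous fun v => s.sup fun a => f a v := by
  classical
  induction s using Finset.induction with
  | empty => simpa using continuous_const
  | insert _ _ h ih => simp only [Finset.sup_insert]; exact (hf _).sup ih

lemma continuous_maxMul {n : ℕ} (A : Matrix (Fin n) (Fin n) ℝ≥0) : Continuous (maxMul A) := by
  apply continuous_pi; intro i
  exact continuous_finset_sup _ _ fun j => continuous_const.mul (continuous_apply j)

lemma continuous_nrm {n : ℕ} : Continuous fun v : Fin n → ℝ≥0 => Finset.univ.sup v :=
  continuous_finset_sup _ _ fun j => continuous_apply j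

lemma isClosed_le_pi {n : ℕ} {f g : (Fin n → ℝ≥0) → (Fin n → ℝ≥0)}
    (hf : Continuous f) (hg : Continuous g) : IsClosed {v | f v ≤ g v} := by
  have : {v | f v ≤ g v} = ⋂ i, {v | f v i ≤ g v i} := by
    ext v; simp [Pi.le_def, Set.mem_iInter]
  rw [this]
  exact isClosed_iInter fun i =>
    isClosed_le ((continuous_apply i).comp hf) ((continuous_apply i).comp hg)

lemma isCompact_ball {n : ℕ} (C : ℝ≥0) : IsCompact {v : Fin n → ℝ≥0 | ∀ i, v i ≤ C} := by
  have : {v : Fin n → ℝ≥0 | ∀ i, v i ≤ C} = Set.pi Set.univ (fun _ => Set.Icc 0 C) := by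
    ext v; simp [Set.mem_pi, Set.mem_Icc, Pi.le_def]
  rw [this]; exact isCompact_univ_pi fun _ => isCompact_Icc

lemma nrm_smul {n : ℕ} (r : ℝ≥0) (v : Fin n → ℝ≥0) :
    Finset.univ.sup (r • v) = r * Finset.univ.sup v := by
  rw [NNReal.mul_finset_sup]; rfl

lemma nrm_ne_zero {n : ℕ} {v : Fin n → ℝ≥0} (h : v ≠ 0) : Finset.univ.sup v ≠ 0 := by
  intro h0
  apply h
  funext i
  have := Finset.le_sup (f := v) (Finset.mem_univ i)
  rw [h0] at this
  simpa using this

lemma key {n : ℕ} (S : Set (Matrix (Fin n) (Fin n) ℝ≥0))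
    (hcomm : ∀ A ∈ S, ∀ B ∈ S, maxMatMul A B = maxMatMul B A)
    (W : Set (Fin n → ℝ≥0)) (hW : MaxCone W) (hWcl : IsClosed W)
    (hWinv : ∀ A ∈ S, ∀ v ∈ W, maxMul A v ∈ W)
    (hmin : ∀ U : Set (Fin n → ℝ≥0), MaxCone U → IsClosed U →
      (∀ A ∈ S, ∀ v ∈ U, maxMul A v ∈ U) → U ⊆ W → (∃ u ∈ U, u ≠ 0) → U = W)
    (A : Matrix (Fin n) (Fin n) ℝ≥0) (hA : A ∈ S)
    (w₀ : Fin n → ℝ≥0) (hw₀ : w₀ ∈ W) (hw₀0 : w₀ ≠ 0) :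
    ∃ lam : ℝ≥0, maxMul A w₀ = lam • w₀ := by
  classical
  obtain ⟨hW0, hWsup, hWsmul⟩ := hW
  -- sub/super eigencones
  set Wle : ℝ≥0 → Set (Fin n → ℝ≥0) := fun l => {v | v ∈ W ∧ maxMul A v ≤ l • v} with hWle
  set Uge : ℝ≥0 → Set (Fin n → ℝ≥0) := fun l => {v | v ∈ W ∧ l • v ≤ maxMul A v} with hUge
  -- dichotomies
  have dichW : ∀ l : ℝ≥0, (∃ v ∈ Wle l, v ≠ 0) → Wle l = W := by
    intro l ⟨v, hv, hv0⟩
    refine hmin (Wle l) ⟨⟨hW0, by simp [hWle, maxMul_zero]⟩, ?_, ?_⟩ ?_ ?_ (fun x hx => hx.1) ⟨v, hv, hv0⟩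
    · intro x hx y hy
      exact ⟨hWsup x hx.1 y hy.1, by
        rw [maxMul_sup, smul_sup']; exact sup_le_sup hx.2 hy.2⟩
    · intro r x hx
      refine ⟨hWsmul r x hx.1, ?_⟩
      rw [maxMul_smul]
      intro i
      show r * maxMul A x i ≤ l * (r * x i)
      rw [mul_left_comm]
      exact mul_le_mul_left' (hx.2 i) r
    · have : Wle l = W ∩ {v | maxMul A v ≤ l • v} := rfl
      rw [this]
      exact hWcl.inter (isClosed_le_pi (continuous_maxMul A) (continuous_const_smul l))
    · intro B hB x hx
      refine ⟨hWinv B hB x hx.1, ?_⟩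
      have h1 : maxMul A (maxMul B x) = maxMul B (maxMul A x) := by
        rw [← maxMul_assoc, hcomm A hA B hB, maxMul_assoc]
      rw [h1, ← maxMul_smul]
      exact maxMul_mono B hx.2
  have dichU : ∀ l : ℝ≥0, (∃ v ∈ Uge l, v ≠ 0) → Uge l = W := by
    intro l ⟨v, hv, hv0⟩
    refine hmin (Uge l) ⟨⟨hW0, by simp [hUge, maxMul_zero]⟩, ?_, ?_⟩ ?_ ?_ (fun x hx => hx.1) ⟨v, hv, hv0⟩
    · intro x hx y hy
      exact ⟨hWsup x hx.1 y hy.1, by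
        rw [maxMul_sup, smul_sup']; exact sup_le_sup hx.2 hy.2⟩
    · intro r x hx
      refine ⟨hWsmul r x hx.1, ?_⟩
      rw [maxMul_smul]
      intro i
      show l * (r * x i) ≤ r * maxMul A x i
      rw [mul_left_comm]
      exact mul_le_mul_left' (hx.2 i) r
    · have : Uge l = W ∩ {v | l • v ≤ maxMul A v} := rfl
      rw [this]
      exact hWcl.inter (isClosed_le_pi (continuous_const_smul l) (continuous_maxMul A))
    · intro B hB x hx
      refine ⟨hWinv B hB x hx.1, ?_⟩
      have h1 : maxMul A (maxMul B x) = maxMul B (maxMul A x) := by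
        rw [← maxMul_assoc, hcomm A hA B hB, maxMul_assoc]
      rw [h1, ← maxMul_smul]
      exact maxMul_mono B hx.2
  
  -- the ratio μ
  set T : Finset (Fin n) := Finset.univ.filter (fun i => w₀ i ≠ 0) with hT
  have hTne : T.Nonempty := by
    obtain ⟨i, hi⟩ := Function.ne_iff.1 hw₀0
    exact ⟨i, by simp [hT]; simpa using hi⟩
  set μ : ℝ≥0 := T.inf' hTne (fun i => maxMul A w₀ i / w₀ i) with hμ
  have h_up : μ • w₀ ≤ maxMul A w₀ := by
    intro i
    show μ * w₀ i ≤ maxMul A w₀ i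
    by_cases h0 : w₀ i = 0
    · simp [h0]
    · have h1 : μ ≤ maxMul A w₀ i / w₀ i := Finset.inf'_le _ (by simp [hT, h0])
      calc μ * w₀ i ≤ maxMul A w₀ i / w₀ i * w₀ i := mul_le_mul_right' h1 _
        _ = maxMul A w₀ i := div_mul_cancel₀ _ h0
  refine ⟨μ, ?_⟩
  suffices h : maxMul A w₀ ≤ μ • w₀ from le_antisymm h h_up
  by_contra hcon
  have hWμ : ∀ v ∈ Wle μ, v = 0 := by
    intro v hv
    by_contra hv0
    have hw' : w₀ ∈ Wle μ := by rw [dichW μ ⟨v, hv, hv0⟩]; exact hw₀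
    exact hcon hw'.2
  have hex : ∃ lam : ℝ≥0, μ < lam ∧ ∀ v ∈ Wle lam, v = 0 := by
    by_contra h
    push_neg at h
    have hle : ∀ lam : ℝ≥0, μ < lam → maxMul A w₀ ≤ lam • w₀ := by
      intro lam hlam
      obtain ⟨v, hv, hv0⟩ := h lam hlam
      have hw' : w₀ ∈ Wle lam := by rw [dichW lam ⟨v, hv, hv0⟩]; exact hw₀
      exact hw'.2
    apply hcon
    intro i
    show maxMul A w₀ i ≤ μ * w₀ i
    by_contra hgt
    push_neg at hgt
    by_cases h0 : w₀ i = 0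
    · have h1 := hle (μ + 1) (lt_add_of_pos_right μ one_pos) i
      have h2 : maxMul A w₀ i ≤ 0 := by
        calc maxMul A w₀ i ≤ (μ + 1) * w₀ i := h1
          _ = 0 := by rw [h0, mul_zero]
      have h3 : 0 < maxMul A w₀ i := by
        calc (0:ℝ≥0) ≤ μ * w₀ i := zero_le
          _ < maxMul A w₀ i := hgt
      exact absurd h2 (not_le.2 h3)
    · have hμlt : μ < maxMul A w₀ i / w₀ i := by
        rw [lt_div_iff₀ (pos_iff_ne_zero.2 h0)]
        exact hgt
      obtain ⟨lam, h1, h2⟩ := exists_between hμlt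
      have h3 : maxMul A w₀ i ≤ lam * w₀ i := hle lam h1 i
      rw [lt_div_iff₀ (pos_iff_ne_zero.2 h0)] at h2
      exact absurd h3 (not_le.2 h2)
  obtain ⟨lam, hμlam, hWlam⟩ := hex
  have hlam0 : lam ≠ 0 := (lt_of_le_of_lt (zero_le : 0 ≤ μ) hμlam).ne'
  have hUlam : ∀ v ∈ Uge lam, v = 0 := by
    intro v hv
    by_contra hv0
    have hw' : w₀ ∈ Uge lam := by rw [dichU lam ⟨v, hv, hv0⟩]; exact hw₀
    have hlμ : lam ≤ μ := by
      apply Finset.le_inf'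
      intro i hi
      have h0 : w₀ i ≠ 0 := by simpa [hT] using hi
      rw [le_div_iff₀ (pos_iff_ne_zero.2 h0)]
      exact hw'.2 i
    exact absurd hlμ (not_le.2 hμlam)
  -- iteration
  set u : ℕ → Fin n → ℝ≥0 := fun k => Nat.rec w₀ (fun _ v => v ⊔ lam⁻¹ • maxMul A v) k with hu
  have huS : ∀ k, u (k+1) = u k ⊔ lam⁻¹ • maxMul A (u k) := fun k => rfl
  have hu0 : u 0 = w₀ := rfl
  have huW : ∀ k, u k ∈ W := by
    intro k; induction k with
    | zero => exact hw₀
    | succ k ih => rw [huS]; exact hWsup _ ih _ (hWsmul _ _ (hWinv A hA _ ih))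
  have humono : Monotone u := monotone_nat_of_le_succ fun k => by rw [huS]; exact le_sup_left
  have huw₀ : ∀ k, w₀ ≤ u k := fun k => hu0 ▸ humono (Nat.zero_le k)
  have hlaminv : ∀ x : Fin n → ℝ≥0, lam • (lam⁻¹ • x) = x := by
    intro x; rw [smul_smul, mul_inv_cancel₀ hlam0, one_smul]
  have hkey : ∀ k, lam • u (k+1) ≤ lam • w₀ ⊔ maxMul A (u k) := by
    intro k; induction k with
    | zero =>
      rw [huS, smul_sup', hlaminv, hu0]
    | succ k ih =>
      rw [huS (k+1), smul_sup', hlaminv]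
      exact sup_le (le_trans ih (sup_le_sup_left (maxMul_mono A (humono (Nat.le_succ k))) _))
        le_sup_right
  by_cases hbdd : ∃ C : ℝ≥0, ∀ k i, u k i ≤ C
  · -- bounded case : limit is a nonzero sub-eigenvector
    obtain ⟨C, hC⟩ := hbdd
    set v : Fin n → ℝ≥0 := fun i => ⨆ k, u k i with hv
    have hvt : Tendsto u atTop (𝓝 v) := by
      rw [tendsto_pi_nhds]
      intro i
      exact tendsto_atTop_ciSup (fun a b hab => humono hab i) ⟨C, fun x ⟨k, hk⟩ => hk ▸ hC k i⟩
    have hvW : v ∈ W := hWcl.mem_of_tendsto hvt (Filter.Eventually.of_forall huW)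
    have hsub : maxMul A v ≤ lam • v := by
      have hmaxi : ∀ i, v i ⊔ lam⁻¹ * maxMul A v i = v i := by
        intro i
        have ha : Tendsto (fun k => u k i) atTop (𝓝 (v i)) := (tendsto_pi_nhds.1 hvt) i
        have hb : Tendsto (fun k => lam⁻¹ * maxMul A (u k) i) atTop
            (𝓝 (lam⁻¹ * maxMul A v i)) :=
          tendsto_const_nhds.mul ((((continuous_apply i).comp (continuous_maxMul A)).tendsto v).comp hvt)
        have hc : Tendsto (fun k => u (k+1) i) atTop (𝓝 (v i)) :=
          ((tendsto_pi_nhds.1 hvt) i).comp (tendsto_add_atTop_nat 1)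
        have hd : Tendsto (fun k => u k i ⊔ lam⁻¹ * maxMul A (u k) i) atTop
            (𝓝 (v i ⊔ lam⁻¹ * maxMul A v i)) := ha.max hb
        have he : (fun k => u k i ⊔ lam⁻¹ * maxMul A (u k) i) = fun k => u (k+1) i := by
          funext k; rw [huS k]; rfl
        rw [he] at hd
        exact (tendsto_nhds_unique hd hc)
      intro i
      show maxMul A v i ≤ lam * v i
      have hb : lam⁻¹ * maxMul A v i ≤ v i := by
        rw [← hmaxi i]; exact le_sup_right
      calc maxMul A v i = lam * (lam⁻¹ * maxMul A v i) := by
            rw [← mul_assoc, mul_inv_cancel₀ hlam0, one_mul]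
        _ ≤ lam * v i := mul_le_mul_left' hb lam
    have hv0 : v ≠ 0 := by
      intro h
      apply hw₀0
      funext i
      have hbd : BddAbove (Set.range fun k => u k i) := by
        refine ⟨C, fun x hx => ?_⟩
        obtain ⟨k, hk⟩ := hx
        rw [← hk]; exact hC k i
      have h1 : w₀ i ≤ v i := le_ciSup hbd 0
      rw [h] at h1
      exact le_antisymm h1 (zero_le)
    exact absurd (hWlam v ⟨hvW, hsub⟩) hv0
  · -- unbounded case : normalized limit is a nonzero super-eigenvector
    push_neg at hbdd
    set N : ℕ → ℝ≥0 := fun k => Finset.univ.sup (u k) with hN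
    have hNmono : Monotone N := fun a b h => Finset.sup_mono_fun fun i _ => humono h i
    have hNtop : Tendsto N atTop atTop := by
      apply tendsto_atTop_atTop_of_monotone hNmono
      intro C
      obtain ⟨k, i, hk⟩ := hbdd C
      exact ⟨k, le_trans hk.le (Finset.le_sup (Finset.mem_univ i))⟩
    have hN0 : ∀ k, N k ≠ 0 := by
      intro k h
      apply hw₀0
      funext i
      refine le_antisymm ?_ (zero_le)
      calc w₀ i ≤ u k i := huw₀ k i
        _ ≤ N k := Finset.le_sup (Finset.mem_univ i)
        _ = 0 := h
    set z : ℕ → Fin n → ℝ≥0 := fun k => (N k)⁻¹ • u k with hz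
    have hzW : ∀ k, z k ∈ W := fun k => hWsmul _ _ (huW k)
    have hz1 : ∀ k, z k ∈ {v : Fin n → ℝ≥0 | ∀ i, v i ≤ 1} := by
      intro k i
      show (N k)⁻¹ * u k i ≤ 1
      rw [← inv_mul_cancel₀ (hN0 k)]
      exact mul_le_mul_left' (Finset.le_sup (Finset.mem_univ i)) _
    obtain ⟨zs, hzsK, φ, hφ, hzt⟩ := (isCompact_ball (n := n) 1).tendsto_subseq hz1
    have hzsW : zs ∈ W := hWcl.mem_of_tendsto hzt (Filter.Eventually.of_forall fun k => hzW _)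
    have hzsup : Finset.univ.sup zs = 1 := by
      have h1 : Tendsto (fun k => Finset.univ.sup (z (φ k))) atTop (𝓝 (Finset.univ.sup zs)) :=
        (continuous_nrm.tendsto zs).comp hzt
      have h2 : (fun k => Finset.univ.sup (z (φ k))) = fun _ => 1 := by
        funext k
        show Finset.univ.sup ((N (φ k))⁻¹ • u (φ k)) = 1
        rw [nrm_smul, inv_mul_cancel₀ (hN0 _)]
      rw [h2] at h1
      exact tendsto_nhds_unique h1 tendsto_const_nhds
    have hzs0 : zs ≠ 0 := by
      intro h
      rw [h] at hzsup
      have h0 : Finset.univ.sup (0 : Fin n → ℝ≥0) = 0 :=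
        le_antisymm (Finset.sup_le fun i _ => le_rfl) (zero_le)
      rw [h0] at hzsup
      exact zero_ne_one hzsup
    have hNinv : Tendsto (fun k => (N (φ k))⁻¹) atTop (𝓝 0) := by
      have h1 : Tendsto (fun k => N (φ k)) atTop atTop := hNtop.comp hφ.tendsto_atTop
      rw [← NNReal.tendsto_coe]
      simp only [NNReal.coe_inv, NNReal.coe_zero]
      exact tendsto_inv_atTop_zero.comp (NNReal.tendsto_coe_atTop.2 h1)
    have hineq : ∀ k i, lam * z k i ≤ maxMul A (z k) i ⊔ lam * (N k)⁻¹ * w₀ i := by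
      intro k i
      have h1 : lam * u k i ≤ lam * w₀ i ⊔ maxMul A (u k) i :=
        le_trans (mul_le_mul_left' (humono (Nat.le_succ k) i) lam) (hkey k i)
      have h2 := mul_le_mul_left' h1 (N k)⁻¹
      rw [mul_sup'] at h2
      calc lam * z k i = (N k)⁻¹ * (lam * u k i) := by
            show lam * ((N k)⁻¹ * u k i) = _; ring
        _ ≤ (N k)⁻¹ * (lam * w₀ i) ⊔ (N k)⁻¹ * maxMul A (u k) i := h2
        _ ≤ maxMul A (z k) i ⊔ lam * (N k)⁻¹ * w₀ i := by
            apply sup_le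
            · apply le_sup_of_le_right
              apply le_of_eq; ring
            · apply le_sup_of_le_left
              apply le_of_eq
              show (N k)⁻¹ * maxMul A (u k) i = maxMul A ((N k)⁻¹ • u k) i
              rw [maxMul_smul]; rfl
    have hfin : lam • zs ≤ maxMul A zs := by
      intro i
      show lam * zs i ≤ maxMul A zs i
      have hL : Tendsto (fun k => lam * z (φ k) i) atTop (𝓝 (lam * zs i)) :=
        tendsto_const_nhds.mul (((continuous_apply i).tendsto zs).comp hzt)
      have hR : Tendsto (fun k => maxMul A (z (φ k)) i ⊔ lam * (N (φ k))⁻¹ * w₀ i) atTop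
          (𝓝 (maxMul A zs i ⊔ lam * 0 * w₀ i)) := by
        apply Filter.Tendsto.max
        · exact (((continuous_apply i).comp (continuous_maxMul A)).tendsto zs).comp hzt
        · exact (tendsto_const_nhds.mul hNinv).mul tendsto_const_nhds
      have h3 := le_of_tendsto_of_tendsto' hL hR (fun k => hineq (φ k) i)
      simpa using h3
    exact absurd (hUlam zs ⟨hzsW, hfin⟩) hzs0

theorem stmt15 {n : ℕ} (S : Set (Matrix (Fin n) (Fin n) ℝ≥0))
    (hmul : ∀ A ∈ S, ∀ B ∈ S, maxMatMul A B ∈ S)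
    (hcomm : ∀ A ∈ S, ∀ B ∈ S, maxMatMul A B = maxMatMul B A)
    (V : Set (Fin n → ℝ≥0)) (hV : MaxCone V) (hcl : IsClosed V)
    (hnz : ∃ w ∈ V, w ≠ 0)
    (hinv : ∀ A ∈ S, ∀ v ∈ V, maxMul A v ∈ V) :
    ∃ v ∈ V, v ≠ 0 ∧ ∀ A ∈ S, ∃ lam : ℝ≥0, maxMul A v = lam • v := by
  classical
  set P : Set (Set (Fin n → ℝ≥0)) := {W | (MaxCone W ∧ IsClosed W ∧
      (∀ A ∈ S, ∀ v ∈ W, maxMul A v ∈ W) ∧ W ⊆ V) ∧ ∃ w ∈ W, w ≠ 0} with hP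
  have hVP : V ∈ P := ⟨⟨hV, hcl, hinv, subset_rfl⟩, hnz⟩
  have hchain : ∀ c ⊆ P, IsChain (· ⊆ ·) c → ∃ lb ∈ P, ∀ s ∈ c, lb ⊆ s := by
    intro c hcP hch
    rcases c.eq_empty_or_nonempty with rfl | hcne
    · exact ⟨V, hVP, by simp⟩
    · have hne : Nonempty c := hcne.to_subtype
      set K : c → Set (Fin n → ℝ≥0) :=
        fun Wc => {v ∈ (Wc : Set (Fin n → ℝ≥0)) | Finset.univ.sup v = 1} with hK
      have hKsub : ∀ Wc : c, K Wc ⊆ {v : Fin n → ℝ≥0 | ∀ i, v i ≤ 1} := by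
        intro Wc v hv i
        rw [← hv.2]; exact Finset.le_sup (Finset.mem_univ i)
      have hKcl : ∀ Wc : c, IsClosed (K Wc) := by
        intro Wc
        have : K Wc = (Wc : Set (Fin n → ℝ≥0)) ∩
            ((fun v : Fin n → ℝ≥0 => Finset.univ.sup v) ⁻¹' {1}) := rfl
        rw [this]
        exact ((hcP Wc.2).1.2.1).inter (isClosed_singleton.preimage continuous_nrm)
      have hKcp : ∀ Wc : c, IsCompact (K Wc) :=
        fun Wc => (isCompact_ball (n := n) 1).of_isClosed_subset (hKcl Wc) (hKsub Wc)
      have hKne : ∀ Wc : c, (K Wc).Nonempty := by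
        intro Wc
        obtain ⟨⟨hMC, _, _, _⟩, w, hw, hw0⟩ := hcP Wc.2
        refine ⟨(Finset.univ.sup w)⁻¹ • w, hMC.2.2 _ _ hw, ?_⟩
        rw [nrm_smul, inv_mul_cancel₀ (nrm_ne_zero hw0)]
      have hdir : Directed (· ⊇ ·) K := by
        intro W1 W2
        rcases hch.total W1.2 W2.2 with h | h
        · exact ⟨W1, subset_rfl, fun v hv => ⟨h hv.1, hv.2⟩⟩
        · exact ⟨W2, fun v hv => ⟨h hv.1, hv.2⟩, subset_rfl⟩
      obtain ⟨v, hv⟩ :=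
        IsCompact.nonempty_iInter_of_directed_nonempty_isCompact_isClosed K hdir hKne hKcp hKcl
      have hvmem : v ∈ ⋂₀ c := by
        intro W hW
        exact (Set.mem_iInter.1 hv ⟨W, hW⟩).1
      have hvne : v ≠ 0 := by
        intro h
        have h1 := (Set.mem_iInter.1 hv hne.some).2
        rw [h] at h1
        have h0 : Finset.univ.sup (0 : Fin n → ℝ≥0) = 0 :=
          le_antisymm (Finset.sup_le fun i _ => le_rfl) (zero_le)
        rw [h0] at h1
        exact zero_ne_one h1
      obtain ⟨W0, hW0⟩ := hcne
      refine ⟨⋂₀ c, ⟨⟨⟨?_, ?_, ?_⟩, ?_, ?_, ?_⟩, v, hvmem, hvne⟩,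
        fun s hs => Set.sInter_subset_of_mem hs⟩
      · intro W hW; exact (hcP hW).1.1.1
      · intro x hx y hy W hW
        exact (hcP hW).1.1.2.1 x (hx W hW) y (hy W hW)
      · intro r x hx W hW
        exact (hcP hW).1.1.2.2 r x (hx W hW)
      · exact isClosed_sInter fun W hW => (hcP hW).1.2.1
      · intro A hA x hx W hW
        exact (hcP hW).1.2.2.1 A hA x (hx W hW)
      · exact (Set.sInter_subset_of_mem hW0).trans (hcP hW0).1.2.2.2
  obtain ⟨W, hWmin⟩ := zorn_superset P hchain
  obtain ⟨⟨hWC, hWcl2, hWinv2, hWsubV⟩, w₀, hw₀, hw₀0⟩ := hWmin.1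
  refine ⟨w₀, hWsubV hw₀, hw₀0, fun A hA => ?_⟩
  refine key S hcomm W hWC hWcl2 hWinv2 ?_ A hA w₀ hw₀ hw₀0
  intro U hU1 hU2 hU3 hU4 hU5
  exact Set.Subset.antisymm hU4 (hWmin.2 ⟨⟨hU1, hU2, hU3, hU4.trans hWsubV⟩, hU5⟩ hU4)
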